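/- Let D₁ ∈ B(X₁), D₂ ∈ B(X₂) be operators on Banach spaces such that D₂ is right invertible, R(D₁) is closed, N(D₁) is complemented, and there exists a left invertible bounded operator from X₁/R(D₁) (identified with a topological complement of R(D₁)) into N(D₂). Then there exists A ∈ B(X₂, X₁) such that the operator matrix [[D₁, A],[0, D₂]] is right invertible on X₁ ⊕ X₂. -/

import Mathlib

open ContinuousLinearMap in
/-- The upper triangular operator matrix `[[D₁, A],[0, D₂]]` acting on `X₁ × X₂`. -/
noncomputable def upperTriangular {X₁ X₂ : Type*} [NormedAddCommGroup X₁] [NormedAddCommGroup X₂]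
    [NormedSpace ℂ X₁] [NormedSpace ℂ X₂]
    (D₁ : X₁ →L[ℂ] X₁) (D₂ : X₂ →L[ℂ] X₂) (A : X₂ →L[ℂ] X₁) :
    (X₁ × X₂) →L[ℂ] (X₁ × X₂) :=
  (D₁.comp (fst ℂ X₁ X₂) + A.comp (snd ℂ X₁ X₂)).prod (D₂.comp (snd ℂ X₁ X₂))

variable {X₁ X₂ : Type*} [NormedAddCommGroup X₁] [NormedSpace ℂ X₁] [CompleteSpace X₁]
  [NormedAddCommGroup X₂] [NormedSpace ℂ X₂] [CompleteSpace X₂]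

/-- Banach space version: if `D₂` is right invertible, `R(D₁)` is closed, `N(D₁)` is
complemented, and a topological complement of `R(D₁)` embeds by a bounded left-invertible
operator into `N(D₂)`, then some completion `[[D₁, A],[0, D₂]]` is right invertible. -/
theorem stmt18 (D₁ : X₁ →L[ℂ] X₁) (D₂ : X₂ →L[ℂ] X₂)
    (h1 : ∃ S : X₂ →L[ℂ] X₂, D₂.comp S = ContinuousLinearMap.id ℂ X₂)
    (h2 : IsClosed (LinearMap.range (D₁ : X₁ →ₗ[ℂ] X₁) : Set X₁))
    (h3 : ∃ N : Submodule ℂ X₁, IsClosed (N : Set X₁) ∧ IsCompl (LinearMap.ker (D₁ : X₁ →ₗ[ℂ] X₁)) N)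
    (h4 : ∃ W : Submodule ℂ X₁, IsClosed (W : Set X₁) ∧ IsCompl (LinearMap.range (D₁ : X₁ →ₗ[ℂ] X₁)) W ∧
      ∃ J : W →L[ℂ] (LinearMap.ker (D₂ : X₂ →ₗ[ℂ] X₂)), ∃ J' : (LinearMap.ker (D₂ : X₂ →ₗ[ℂ] X₂)) →L[ℂ] W,
        J'.comp J = ContinuousLinearMap.id ℂ W) :
    ∃ A : X₂ →L[ℂ] X₁, ∃ S : (X₁ × X₂) →L[ℂ] (X₁ × X₂),
      (upperTriangular D₁ D₂ A).comp S = ContinuousLinearMap.id ℂ (X₁ × X₂) := by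
  obtain ⟨S₀, hS₀⟩ := h1
  obtain ⟨N, hNc, hN⟩ := h3
  obtain ⟨W, hWc, hW, J, J', hJ⟩ := h4
  have hS₀' : ∀ y, D₂ (S₀ y) = y := fun y => ContinuousLinearMap.ext_iff.1 hS₀ y
  have hJ' : ∀ w : W, J' (J w) = w := fun w => ContinuousLinearMap.ext_iff.1 hJ w
  haveI : CompleteSpace N := hNc.completeSpace_coe
  haveI : CompleteSpace (LinearMap.range (D₁ : X₁ →ₗ[ℂ] X₁)) := h2.completeSpace_coe
  -- the restriction of D₁ to N, as a map onto its range
  set D₁N : N →L[ℂ] (LinearMap.range (D₁ : X₁ →ₗ[ℂ] X₁)) :=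
    (D₁.comp N.subtypeL).codRestrict (LinearMap.range (D₁ : X₁ →ₗ[ℂ] X₁))
      (fun x => LinearMap.mem_range_self _ _) with hD₁N
  have hker : LinearMap.ker (D₁N : N →ₗ[ℂ] (LinearMap.range (D₁ : X₁ →ₗ[ℂ] X₁))) = ⊥ := by
    rw [eq_bot_iff]
    intro x hx
    have hx' : D₁ (x : X₁) = 0 := by
      have := congrArg (Subtype.val) hx
      exact this
    have : (x : X₁) ∈ (LinearMap.ker (D₁ : X₁ →ₗ[ℂ] X₁)) ⊓ N := ⟨hx', x.2⟩
    rw [hN.inf_eq_bot] at this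
    exact (Submodule.mem_bot ℂ).2 (Subtype.ext (by simpa using this))
  have hrange : LinearMap.range (D₁N : N →ₗ[ℂ] (LinearMap.range (D₁ : X₁ →ₗ[ℂ] X₁))) = ⊤ := by
    rw [eq_top_iff]
    rintro ⟨y, hy⟩ -
    obtain ⟨x, hx⟩ := hy
    refine ⟨N.linearProjOfIsCompl (LinearMap.ker (D₁ : X₁ →ₗ[ℂ] X₁)) hN.symm x, ?_⟩
    apply Subtype.ext
    have hdecomp : ((N.linearProjOfIsCompl (LinearMap.ker (D₁ : X₁ →ₗ[ℂ] X₁)) hN.symm x : X₁)) + ((LinearMap.ker (D₁ : X₁ →ₗ[ℂ] X₁)).linearProjOfIsCompl N hN x : X₁) = x :=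
      Submodule.projection_add_projection_eq_self hN.symm x
    have hkx : D₁ ((LinearMap.ker (D₁ : X₁ →ₗ[ℂ] X₁)).linearProjOfIsCompl N hN x : X₁) = 0 :=
      ((LinearMap.ker (D₁ : X₁ →ₗ[ℂ] X₁)).linearProjOfIsCompl N hN x).2
    have : D₁ ((N.linearProjOfIsCompl (LinearMap.ker (D₁ : X₁ →ₗ[ℂ] X₁)) hN.symm x : X₁)) = D₁ x := by
      conv_rhs => rw [← hdecomp]
      rw [map_add, hkx, add_zero]
    exact this.trans hx
  set e := ContinuousLinearEquiv.ofBijective D₁N hker hrange with he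
  have he' : ∀ y : LinearMap.range (D₁ : X₁ →ₗ[ℂ] X₁), D₁ ((e.symm y : N) : X₁) = (y : X₁) := by
    intro y
    have h0 : ((e (e.symm y) : LinearMap.range (D₁ : X₁ →ₗ[ℂ] X₁)) : X₁) = (y : X₁) :=
      congrArg Subtype.val (e.apply_symm_apply y)
    exact h0
  -- projections
  set PR : X₁ →L[ℂ] (LinearMap.range (D₁ : X₁ →ₗ[ℂ] X₁)) :=
    (LinearMap.range (D₁ : X₁ →ₗ[ℂ] X₁)).linearProjOfClosedCompl W hW h2 hWc with hPR
  set PW : X₁ →L[ℂ] W := W.linearProjOfClosedCompl (LinearMap.range (D₁ : X₁ →ₗ[ℂ] X₁)) hW.symm hWc h2 with hPW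
  have hPRW : ∀ x : X₁, ((PR x : X₁) + (PW x : X₁)) = x := by
    intro x
    exact Submodule.projection_add_projection_eq_self hW x
  have hPWW : ∀ w : W, PW (w : X₁) = w := by
    intro w
    exact Submodule.projectionOnto_apply_left hW.symm w -- was simpa

  -- generalized inverse of D₁
  set G : X₁ →L[ℂ] X₁ := N.subtypeL.comp ((e.symm : (LinearMap.range (D₁ : X₁ →ₗ[ℂ] X₁)) →L[ℂ] N).comp PR)
    with hG
  have hDG : ∀ x, D₁ (G x) = (PR x : X₁) := fun x => he' (PR x)
  -- projection onto ker D₂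
  set π : X₂ →L[ℂ] (LinearMap.ker (D₂ : X₂ →ₗ[ℂ] X₂)) :=
    (ContinuousLinearMap.id ℂ X₂ - S₀.comp D₂).codRestrict (LinearMap.ker (D₂ : X₂ →ₗ[ℂ] X₂))
      (fun y => by simp [LinearMap.mem_ker, hS₀']) with hπ
  have hπker : ∀ y : LinearMap.ker (D₂ : X₂ →ₗ[ℂ] X₂), π (y : X₂) = y := by
    intro y
    apply Subtype.ext
    have hy : D₂ (y : X₂) = 0 := y.2
    simp [hπ, hy]
  -- the operator A and the right inverse pieces
  set A : X₂ →L[ℂ] X₁ := W.subtypeL.comp (J'.comp π) with hA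
  set S21 : X₁ →L[ℂ] X₂ := (LinearMap.ker (D₂ : X₂ →ₗ[ℂ] X₂)).subtypeL.comp (J.comp PW) with hS21
  set S22 : X₂ →L[ℂ] X₂ :=
    S₀ - (LinearMap.ker (D₂ : X₂ →ₗ[ℂ] X₂)).subtypeL.comp (J.comp ((J'.comp π).comp S₀)) with hS22
  refine ⟨A, (G.comp (ContinuousLinearMap.fst ℂ X₁ X₂)).prod
      (S21.comp (ContinuousLinearMap.fst ℂ X₁ X₂) +
        S22.comp (ContinuousLinearMap.snd ℂ X₁ X₂)), ?_⟩
  apply ContinuousLinearMap.ext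
  rintro ⟨x₁, x₂⟩
  simp only [ContinuousLinearMap.comp_apply, ContinuousLinearMap.prod_apply,
    ContinuousLinearMap.add_apply, ContinuousLinearMap.coe_fst', ContinuousLinearMap.coe_snd',
    ContinuousLinearMap.id_apply, upperTriangular, Prod.mk.injEq]
  constructor
  · -- first coordinate
    have e1 : A (S21 x₁) = ((PW x₁ : W) : X₁) := by
      simp only [hA, hS21, ContinuousLinearMap.comp_apply, Submodule.subtypeL_apply]
      rw [hπker, hJ']
    have e2 : A (S22 x₂) = 0 := by
      simp only [hA, hS22, ContinuousLinearMap.comp_apply, Submodule.subtypeL_apply,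
        ContinuousLinearMap.sub_apply]
      rw [map_sub, hπker, map_sub, hJ', sub_self]
      simp
    rw [map_add, e1, e2, add_zero, hDG]
    exact hPRW x₁
  · -- second coordinate
    have e3 : D₂ (S21 x₁) = 0 := (J (PW x₁)).2
    have e4 : D₂ (S22 x₂) = x₂ := by
      simp only [hS22, ContinuousLinearMap.sub_apply, ContinuousLinearMap.comp_apply,
        Submodule.subtypeL_apply]
      have hz : D₂ ((J (J' (π (S₀ x₂))) : X₂)) = 0 := (J (J' (π (S₀ x₂)))).2
      rw [map_sub, hS₀', hz, sub_zero]
    rw [map_add, e3, e4, zero_add]
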